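/- Let E_{p}, E_{q} be n-dimensional complex vector spaces, g^p ⊂ E_p ⊕ ℂⁿ and g^q ⊂ E_q ⊕ ℂⁿ be n-dimensional subspaces with projections R^p, R^q to ℂⁿ. Assume R^p(g^p) + R^q(g^q) = ℂⁿ and g^p ∩ ℂⁿ ∩ g^q = 0 (intersecting inside ℂⁿ). Then g = {(e_p, e_q) ∈ E_p ⊕ E_q : ∃ b ∈ ℂⁿ with (e_p, b) ∈ g^p and (e_q, b) ∈ g^q} is an n-dimensional subspace of E_p ⊕ E_q. -/

import Mathlib

set_option synthInstance.maxHeartbeats 1000000 in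
set_option maxHeartbeats 1000000 in
/-- Section 5.1 of the paper: if `g^p ⊂ E_p ⊕ ℂⁿ` and `g^q ⊂ E_q ⊕ ℂⁿ` are `n`-planes
with `R^p(g^p) + R^q(g^q) = ℂⁿ` and `g^p ∩ ℂⁿ ∩ g^q = 0`, then
`g = {(e_p, e_q) : ∃ b, (e_p, b) ∈ g^p and (e_q, b) ∈ g^q}` is an `n`-dimensional
subspace of `E_p ⊕ E_q`. -/
theorem composite_plane_is_n_dimensional (n : ℕ)
    (Ep Eq : Type) [AddCommGroup Ep] [Module ℂ Ep] [AddCommGroup Eq] [Module ℂ Eq]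
    [FiniteDimensional ℂ Ep] [FiniteDimensional ℂ Eq]
    (hEp : Module.finrank ℂ Ep = n) (hEq : Module.finrank ℂ Eq = n)
    (gp : Submodule ℂ (Ep × (Fin n → ℂ))) (gq : Submodule ℂ (Eq × (Fin n → ℂ)))
    (hgp : Module.finrank ℂ gp = n) (hgq : Module.finrank ℂ gq = n)
    (hspan : Submodule.map (LinearMap.snd ℂ Ep (Fin n → ℂ)) gp ⊔
      Submodule.map (LinearMap.snd ℂ Eq (Fin n → ℂ)) gq = ⊤)
    (hint : ∀ b : Fin n → ℂ, ((0 : Ep), b) ∈ gp → ((0 : Eq), b) ∈ gq → b = 0) :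
    ∃ S : Submodule ℂ (Ep × Eq),
      (↑S : Set (Ep × Eq)) =
        {x | ∃ b : Fin n → ℂ, (x.1, b) ∈ gp ∧ (x.2, b) ∈ gq} ∧
      Module.finrank ℂ S = n := by
  -- the difference of the two projections to ℂⁿ
  let f : (gp × gq) →ₗ[ℂ] (Fin n → ℂ) :=
    { toFun := fun z => z.1.1.2 - z.2.1.2
      map_add' := by intro a b; simp; abel
      map_smul' := by intro c a; simp [smul_sub] }
  -- the projection to Ep × Eq
  let P : (gp × gq) →ₗ[ℂ] (Ep × Eq) :=
    { toFun := fun z => (z.1.1.1, z.2.1.1)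
      map_add' := by intro a b; simp
      map_smul' := by intro c a; simp }
  let K := LinearMap.ker f
  haveI : Module.Finite ℂ (↥gp × ↥gq) := Module.Finite.prod
  refine ⟨K.map P, ?_, ?_⟩
  · ext x
    simp only [SetLike.mem_coe, Submodule.mem_map, Set.mem_setOf_eq]
    constructor
    · rintro ⟨z, hz, hzx⟩
      have hf : z.1.1.2 - z.2.1.2 = 0 := hz
      have hb : z.1.1.2 = z.2.1.2 := by
        have := sub_eq_zero.mp hf; exact this
      refine ⟨z.1.1.2, ?_, ?_⟩
      · have h1 : x.1 = z.1.1.1 := congrArg Prod.fst hzx.symm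
        have : ((z.1 : Ep × (Fin n → ℂ))) ∈ gp := z.1.2
        rw [h1]
        simpa using this
      · have h2 : x.2 = z.2.1.1 := congrArg Prod.snd hzx.symm
        have : ((z.2 : Eq × (Fin n → ℂ))) ∈ gq := z.2.2
        rw [h2, hb]
        simpa using this
    · rintro ⟨b, h1, h2⟩
      refine ⟨(⟨(x.1, b), h1⟩, ⟨(x.2, b), h2⟩), ?_, ?_⟩
      · show (x.1, b).2 - (x.2, b).2 = 0
        simp
      · rfl
  · -- dimension count
    have hker : LinearMap.ker (P.domRestrict K) = ⊥ := by
      rw [LinearMap.ker_eq_bot']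
      rintro ⟨z, hz⟩ hPz
      have hf : z.1.1.2 - z.2.1.2 = 0 := hz
      have hb : z.1.1.2 = z.2.1.2 := sub_eq_zero.mp hf
      have h1 : z.1.1.1 = 0 := congrArg Prod.fst hPz
      have h2 : z.2.1.1 = 0 := congrArg Prod.snd hPz
      have hgl : ((0 : Ep), z.1.1.2) ∈ gp := by
        have := z.1.2; rw [← h1]; simpa using this
      have hgr : ((0 : Eq), z.1.1.2) ∈ gq := by
        have := z.2.2; rw [← h2, hb]; simpa using this
      have hb0 : z.1.1.2 = 0 := hint _ hgl hgr
      have hb0' : z.2.1.2 = 0 := hb ▸ hb0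
      ext <;> simp_all
    have hPinj : Function.Injective (P.domRestrict K) := by intro a b hab; have := LinearMap.ker_eq_bot'.mp hker (a - b) (by simpa [sub_eq_zero] using hab); exact sub_eq_zero.mp this
    have hrange : K.map P = LinearMap.range (P.domRestrict K) := by
      rw [LinearMap.range_domRestrict]
    have hdimS : Module.finrank ℂ (K.map P) = Module.finrank ℂ K := by
      rw [hrange, LinearMap.finrank_range_of_inj hPinj]
    -- f is surjective
    have hfsurj : LinearMap.range f = ⊤ := by
      rw [LinearMap.range_eq_top]
      intro c
      have hc : c ∈ Submodule.map (LinearMap.snd ℂ Ep (Fin n → ℂ)) gp ⊔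
          Submodule.map (LinearMap.snd ℂ Eq (Fin n → ℂ)) gq := by rw [hspan]; trivial
      obtain ⟨b1, hb1, b2, hb2, hsum⟩ := Submodule.mem_sup.mp hc
      obtain ⟨u, hu, hub⟩ := hb1
      obtain ⟨v, hv, hvb⟩ := hb2
      refine ⟨(⟨u, hu⟩, ⟨-v, neg_mem hv⟩), ?_⟩
      show u.2 - (-v).2 = c
      simp only [Prod.snd_neg, sub_neg_eq_add]
      have hub' : u.2 = b1 := hub
      have hvb' : v.2 = b2 := hvb
      rw [hub', hvb']
      exact hsum
    have hrn := LinearMap.finrank_range_add_finrank_ker f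
    rw [hfsurj] at hrn
    have htop : Module.finrank ℂ (⊤ : Submodule ℂ (Fin n → ℂ)) = n := by
      rw [finrank_top]
      simp [Module.finrank_fintype_fun_eq_card]
    have hprod : Module.finrank ℂ (gp × gq) = n + n := by
      rw [Module.finrank_prod, hgp, hgq]
    rw [htop, hprod] at hrn
    rw [hdimS]
    show Module.finrank ℂ (LinearMap.ker f) = n
    omega
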